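/- Let K ≥ 2 be an even integer and let Q_K be the square 2^K-ary QAM constellation. Suppose X ⊆ {1, −1, i, −i} with |X| = 2 and Y is a set of complex numbers such that (X, Y) is a uniquely factorable constellation pair and {y/x : x ∈ X, y ∈ Y} = Q_K. Then there exist distinct y, y' ∈ Y with |y − y'| ≤ 2√2. -/

import Mathlib

/-- A pair `(X, Y)` of sets of complex numbers is a uniquely factorable
constellation pair (UFCP) if `x * y' = x' * y` with `x, x' ∈ X` and
`y, y' ∈ Y` implies `x = x'` and `y = y'`. -/
def IsUFCP (X Y : Set ℂ) : Prop :=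
  ∀ x ∈ X, ∀ x' ∈ X, ∀ y ∈ Y, ∀ y' ∈ Y, x * y' = x' * y → x = x' ∧ y = y'

/-- The square `2^K`-ary QAM constellation (for even `K ≥ 2`). -/
def sqQAM (K : ℕ) : Set ℂ :=
  {z | ∃ m n : ℤ, -(2 : ℤ) ^ ((K - 2) / 2) + 1 ≤ m ∧ m ≤ (2 : ℤ) ^ ((K - 2) / 2) ∧
    -(2 : ℤ) ^ ((K - 2) / 2) + 1 ≤ n ∧ n ≤ (2 : ℤ) ^ ((K - 2) / 2) ∧
    z = (2 * (m : ℂ) - 1) + (2 * (n : ℂ) - 1) * Complex.I}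

lemma corner_dist (a b : ℂ)
    (ha : a ∈ ({1 + Complex.I, -1 + Complex.I, -1 - Complex.I, 1 - Complex.I} : Set ℂ))
    (hb : b ∈ ({1 + Complex.I, -1 + Complex.I, -1 - Complex.I, 1 - Complex.I} : Set ℂ)) :
    ‖a - b‖ ≤ 2 * Real.sqrt 2 := by
  have h := Complex.norm_le_sqrt_two_mul_max (a - b)
  have hre : |(a - b).re| ≤ 2 ∧ |(a - b).im| ≤ 2 := by
    rcases ha with rfl | rfl | rfl | rfl <;> rcases hb with rfl | rfl | rfl | rfl <;>
      constructor <;> simp <;> norm_num [abs_le]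
  have hmax : max |(a - b).re| |(a - b).im| ≤ 2 := max_le hre.1 hre.2
  have h2 : (0:ℝ) ≤ Real.sqrt 2 := Real.sqrt_nonneg 2
  nlinarith [h, hmax]

lemma unit_mul_corner (x p : ℂ)
    (hx : x ∈ ({1, -1, Complex.I, -Complex.I} : Set ℂ))
    (hp : p ∈ ({1 + Complex.I, -1 + Complex.I, -1 - Complex.I, 1 - Complex.I} : Set ℂ)) :
    p * x ∈ ({1 + Complex.I, -1 + Complex.I, -1 - Complex.I, 1 - Complex.I} : Set ℂ) := by
  rcases hx with rfl | rfl | rfl | rfl <;> rcases hp with rfl | rfl | rfl | rfl <;>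
    simp [Set.mem_insert_iff, Complex.ext_iff]

/-- If `X ⊆ {1, -1, i, -i}` has two elements and `(X, Y)` is a UFCP
factorizing the square `2^K`-ary QAM constellation (`K ≥ 2` even), then `Y`
contains two distinct points at distance at most `2√2`. -/
theorem sqQAM_two_min_dist_upper_bound (K : ℕ) (hK2 : 2 ≤ K) (hKeven : K % 2 = 0)
    (X Y : Set ℂ) (hXsub : X ⊆ ({1, -1, Complex.I, -Complex.I} : Set ℂ))
    (hXcard : X.ncard = 2) (hufcp : IsUFCP X Y)
    (hfact : {w : ℂ | ∃ x ∈ X, ∃ y ∈ Y, w = y / x} = sqQAM K) :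
    ∃ y ∈ Y, ∃ y' ∈ Y, y ≠ y' ∧ ‖y - y'‖ ≤ 2 * Real.sqrt 2 := by
  have hp0 : (0:ℤ) < 2 ^ ((K - 2) / 2) := pow_pos (by norm_num) _
  have hpow : (1:ℤ) ≤ 2 ^ ((K - 2) / 2) := hp0
  -- the three corner points are in the QAM constellation
  have hS : ∀ p ∈ ({1 + Complex.I, -1 + Complex.I, -1 - Complex.I, 1 - Complex.I} : Set ℂ),
      p ∈ sqQAM K := by
    intro p hp
    rcases hp with rfl | rfl | rfl | rfl
    · exact ⟨1, 1, by linarith, by linarith, by linarith, by linarith, by push_cast; ring⟩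
    · exact ⟨0, 1, by linarith, by linarith, by linarith, by linarith, by push_cast; ring⟩
    · exact ⟨0, 0, by linarith, by linarith, by linarith, by linarith, by push_cast; ring⟩
    · exact ⟨1, 0, by linarith, by linarith, by linarith, by linarith, by push_cast; ring⟩
  have key : ∀ p ∈ ({1 + Complex.I, -1 + Complex.I, -1 - Complex.I, 1 - Complex.I} : Set ℂ),
      ∃ x ∈ X, ∃ y ∈ Y, y = p * x ∧ x ≠ 0 := by
    intro p hp
    have hmem : p ∈ {w : ℂ | ∃ x ∈ X, ∃ y ∈ Y, w = y / x} := by rw [hfact]; exact hS p hp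
    obtain ⟨x, hx, y, hy, hxy⟩ := hmem
    have hx0 : x ≠ 0 := by
      rcases hXsub hx with rfl | rfl | rfl | rfl <;>
        simp [Complex.I_ne_zero]
    exact ⟨x, hx, y, hy, by rw [hxy, div_mul_cancel₀ _ hx0], hx0⟩
  obtain ⟨x1, hx1, y1, hy1, he1, hn1⟩ := key (1 + Complex.I) (by left; rfl)
  obtain ⟨x2, hx2, y2, hy2, he2, hn2⟩ := key (-1 + Complex.I) (by right; left; rfl)
  obtain ⟨x3, hx3, y3, hy3, he3, hn3⟩ := key (-1 - Complex.I) (by right; right; left; rfl)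
  have hY1 : y1 ∈ ({1 + Complex.I, -1 + Complex.I, -1 - Complex.I, 1 - Complex.I} : Set ℂ) :=
    he1 ▸ unit_mul_corner x1 _ (hXsub hx1) (by left; rfl)
  have hY2 : y2 ∈ ({1 + Complex.I, -1 + Complex.I, -1 - Complex.I, 1 - Complex.I} : Set ℂ) :=
    he2 ▸ unit_mul_corner x2 _ (hXsub hx2) (by right; left; rfl)
  have hY3 : y3 ∈ ({1 + Complex.I, -1 + Complex.I, -1 - Complex.I, 1 - Complex.I} : Set ℂ) :=
    he3 ▸ unit_mul_corner x3 _ (hXsub hx3) (by right; right; left; rfl)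
  -- not all three y's can be equal
  have hne : y1 ≠ y2 ∨ y1 ≠ y3 ∨ y2 ≠ y3 := by
    by_contra h
    push_neg at h
    obtain ⟨h12, h13, h23⟩ := h
    -- then x1, x2, x3 are pairwise distinct, contradicting |X| = 2
    have hx12 : x1 ≠ x2 := by
      intro he
      rw [he1, he2, he] at h12
      have := mul_right_cancel₀ hn2 h12
      have h' : (1 + Complex.I).re = (-1 + Complex.I).re := by rw [this]
      norm_num at h'
    have hx13 : x1 ≠ x3 := by
      intro he
      rw [he1, he3, he] at h13
      have := mul_right_cancel₀ hn3 h13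
      have h' : (1 + Complex.I).re = (-1 - Complex.I).re := by rw [this]
      norm_num at h'
    have hx23 : x2 ≠ x3 := by
      intro he
      rw [he2, he3, he] at h23
      have := mul_right_cancel₀ hn3 h23
      have h' : (-1 + Complex.I).im = (-1 - Complex.I).im := by rw [this]
      norm_num at h'
    have hsub : ({x1, x2, x3} : Set ℂ) ⊆ X := by
      intro z hz
      rcases hz with rfl | rfl | rfl
      exacts [hx1, hx2, hx3]
    have hfin : X.Finite := Set.Finite.subset (Set.toFinite _) hXsub
    have h3 : ({x1, x2, x3} : Set ℂ).ncard = 3 := by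
      rw [Set.ncard_insert_of_notMem (by simp [hx12, hx13]), Set.ncard_pair hx23]
    have := Set.ncard_le_ncard hsub hfin
    omega
  rcases hne with h | h | h
  · exact ⟨y1, hy1, y2, hy2, h, corner_dist _ _ hY1 hY2⟩
  · exact ⟨y1, hy1, y3, hy3, h, corner_dist _ _ hY1 hY3⟩
  · exact ⟨y2, hy2, y3, hy3, h, corner_dist _ _ hY2 hY3⟩
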